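/- Dimension bound for symmetric-group irreps: for a partition λ of n into at most d parts, the dimension of the S_n-irrep P_λ satisfies binom(n; λ)·(n+d)^{−d(d−1)/2} ≤ dim P_λ ≤ binom(n; λ), where binom(n; λ) = n!/(λ_1!···λ_d!). Consequently exp(n H(λ̄))·(n+d)^{−d(d+1)/2} ≤ dim P_λ ≤ exp(n H(λ̄)), with λ̄ = λ/n. -/

import Mathlib

open Finset

lemma aux_fact_pow (a k : ℕ) : a.factorial * a ^ k ≤ k.factorial * a ^ a := by
  rcases le_total k a with h | h
  · have h1 : k.factorial * a.descFactorial (a - k) = a.factorial := by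
      have h2 := Nat.factorial_mul_descFactorial (n := a) (k := a - k) (by omega)
      rwa [show a - (a - k) = k by omega] at h2
    calc a.factorial * a ^ k = k.factorial * (a.descFactorial (a - k) * a ^ k) := by
          rw [← h1]; ring
      _ ≤ k.factorial * (a ^ (a - k) * a ^ k) := by
          gcongr; exact Nat.descFactorial_le_pow a _
      _ = k.factorial * a ^ a := by rw [← pow_add, Nat.sub_add_cancel h]
  · have h1 : a.factorial * k.descFactorial (k - a) = k.factorial := by
      have h2 := Nat.factorial_mul_descFactorial (n := k) (k := k - a) (by omega)
      rwa [show k - (k - a) = a by omega] at h2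
    have h2 : a ^ (k - a) ≤ k.descFactorial (k - a) := by
      calc a ^ (k - a) ≤ (k + 1 - (k - a)) ^ (k - a) := by
            apply Nat.pow_le_pow_left; omega
        _ ≤ k.descFactorial (k - a) := Nat.pow_sub_le_descFactorial k _
    calc a.factorial * a ^ k = a.factorial * a ^ (k - a) * a ^ a := by
          rw [mul_assoc, ← pow_add, Nat.sub_add_cancel h]
      _ ≤ a.factorial * k.descFactorial (k - a) * a ^ a := by gcongr
      _ = k.factorial * a ^ a := by rw [h1]

lemma aux_term_le {d : ℕ} (lam k : Fin d → ℕ) (hs : ∑ i, k i = ∑ i, lam i) :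
    Nat.multinomial univ k * ∏ i, lam i ^ k i ≤
      Nat.multinomial univ lam * ∏ i, lam i ^ lam i := by
  have key : ∏ i, ((lam i).factorial * lam i ^ k i) ≤
      ∏ i, ((k i).factorial * lam i ^ lam i) :=
    Finset.prod_le_prod' fun i _ => aux_fact_pow (lam i) (k i)
  have spec_k := Nat.multinomial_spec univ k
  have spec_l := Nat.multinomial_spec univ lam
  have hpos : 0 < (∏ i, (k i).factorial) * ∏ i, (lam i).factorial := by positivity
  refine Nat.le_of_mul_le_mul_left ?_ hpos
  calc ((∏ i, (k i).factorial) * ∏ i, (lam i).factorial) *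
        (Nat.multinomial univ k * ∏ i, lam i ^ k i)
      = (∑ i, k i).factorial * ∏ i, ((lam i).factorial * lam i ^ k i) := by
        rw [← spec_k, Finset.prod_mul_distrib]; ring
    _ ≤ (∑ i, lam i).factorial * ∏ i, ((k i).factorial * lam i ^ lam i) := by
        rw [hs]; gcongr
    _ = ((∏ i, (k i).factorial) * ∏ i, (lam i).factorial) *
        (Nat.multinomial univ lam * ∏ i, lam i ^ lam i) := by
        rw [← spec_l, Finset.prod_mul_distrib]; ring

lemma aux_reindex (d : ℕ) (lt : Fin d → ℕ) (i : Fin d) (hi : d - 1 - (i : ℕ) ≤ lt i) :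
    ∏ j ∈ univ.filter (fun j : Fin d => i < j), ((lt i : ℝ) - ((d - 1 - (j : ℕ) : ℕ) : ℝ))
      = ((lt i).descFactorial (d - 1 - (i : ℕ)) : ℝ) := by
  have hre : ∏ j ∈ univ.filter (fun j : Fin d => i < j), ((lt i : ℝ) - ((d - 1 - (j : ℕ) : ℕ) : ℝ))
      = ∏ k ∈ range (d - 1 - (i : ℕ)), ((lt i : ℝ) - ((k : ℕ) : ℝ)) := by
    refine Finset.prod_bij' (fun (j : Fin d) _ => d - 1 - (j : ℕ))
      (fun k hk => (⟨d - 1 - k, by have := i.isLt; omega⟩ : Fin d)) ?_ ?_ ?_ ?_ ?_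
    case refine_1 =>
      intro j hj
      simp only [mem_filter, mem_univ, true_and, Fin.lt_def] at hj
      have h2 : (j : ℕ) < d := j.isLt
      simp only [mem_range]; omega
    case refine_2 =>
      intro k hk
      simp only [mem_range] at hk
      simp only [mem_filter, mem_univ, true_and, Fin.lt_def]
      have := i.isLt; omega
    case refine_3 =>
      intro j hj
      simp only [mem_filter, mem_univ, true_and, Fin.lt_def] at hj
      have h2 : (j : ℕ) < d := j.isLt
      apply Fin.ext; simp only []; omega
    case refine_4 =>
      intro k hk
      simp only [mem_range] at hk
      simp only []; omega
    case refine_5 => intro j hj; rfl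
  rw [hre, Nat.descFactorial_eq_prod_range, Nat.cast_prod]
  apply Finset.prod_congr rfl
  intro k hk
  simp only [mem_range] at hk
  rw [Nat.cast_sub (by omega)]

set_option maxHeartbeats 2000000 in
/-- dimension bounds for the symmetric-group irrep `P_λ`, taking
the explicit dimension formula
`dim P_λ = (n!/(λ̃₁!⋯λ̃_d!))·Π_{i<j}(λ̃ᵢ - λ̃ⱼ)` (with `λ̃ = λ + (d-1,…,0)`)
as the definition: `binom(n;λ)(n+d)^{-d(d-1)/2} ≤ dim P_λ ≤ binom(n;λ)` and
`exp(n H(λ̄))(n+d)^{-d(d+1)/2} ≤ dim P_λ ≤ exp(n H(λ̄))`. -/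
theorem dim_Plambda_bounds (d n : ℕ) (hd : 0 < d) (hn : 0 < n)
    (lam : Fin d → ℕ) (hlam : Antitone lam) (hsum : ∑ i, lam i = n) :
    let lt : Fin d → ℕ := fun i => lam i + (d - 1 - (i : ℕ))
    let dimP : ℝ := ((n.factorial : ℝ) / ∏ i, ((lt i).factorial : ℝ)) *
      ∏ i, ∏ j ∈ Finset.univ.filter (fun j : Fin d => i < j), ((lt i : ℝ) - (lt j : ℝ))
    let H : ℝ := ∑ i, Real.negMulLog ((lam i : ℝ) / n)
    ((Nat.multinomial Finset.univ lam : ℝ) * ((n + d : ℝ) ^ (d * (d - 1) / 2))⁻¹ ≤ dimP ∧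
      dimP ≤ (Nat.multinomial Finset.univ lam : ℝ)) ∧
    (Real.exp ((n : ℝ) * H) * ((n + d : ℝ) ^ (d * (d + 1) / 2))⁻¹ ≤ dimP ∧
      dimP ≤ Real.exp ((n : ℝ) * H)) := by
  intro lt dimP H
  have hlt_def : ∀ i, lt i = lam i + (d - 1 - (i : ℕ)) := fun i => rfl
  have hdim_def : dimP = ((n.factorial : ℝ) / ∏ i, ((lt i).factorial : ℝ)) *
      ∏ i, ∏ j ∈ Finset.univ.filter (fun j : Fin d => i < j), ((lt i : ℝ) - (lt j : ℝ)) := rfl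
  have hH_def : H = ∑ i, Real.negMulLog ((lam i : ℝ) / n) := rfl
  set D := d * (d - 1) / 2 with hD
  -- basic facts
  have hlam_le : ∀ i, lam i ≤ n := fun i =>
    hsum ▸ Finset.single_le_sum (f := fun i => lam i) (fun _ _ => Nat.zero_le _) (mem_univ i)
  have hlt_lt : ∀ i j : Fin d, i < j → lt j + 1 ≤ lt i := by
    intro i j hij
    have h1 : lam j ≤ lam i := hlam hij.le
    have h2 : (i : ℕ) < (j : ℕ) := hij
    have h3 : (j : ℕ) < d := j.isLt
    simp only [hlt_def]; omega
  have hfac : ∀ i j : Fin d, i < j → (1 : ℝ) ≤ (lt i : ℝ) - (lt j : ℝ) := by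
    intro i j hij
    have h1 : (lt j : ℝ) + 1 ≤ (lt i : ℝ) := by exact_mod_cast hlt_lt i j hij
    linarith
  -- products
  set P : ℝ := ∏ i, ∏ j ∈ Finset.univ.filter (fun j : Fin d => i < j), ((lt i : ℝ) - (lt j : ℝ))
    with hP
  have one_le_prodR : ∀ (s : Finset (Fin d)) (f : Fin d → ℝ),
      (∀ j ∈ s, (1:ℝ) ≤ f j) → (1:ℝ) ≤ ∏ j ∈ s, f j := by
    intro s f h
    calc (1:ℝ) = ∏ _j ∈ s, (1:ℝ) := by simp
      _ ≤ ∏ j ∈ s, f j := Finset.prod_le_prod (by intros; norm_num) h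
  have hinner_ge1 : ∀ i : Fin d,
      (1 : ℝ) ≤ ∏ j ∈ univ.filter (fun j : Fin d => i < j), ((lt i : ℝ) - (lt j : ℝ)) := by
    intro i
    apply one_le_prodR
    intro j hj
    exact hfac i j (by simpa using hj)
  have hP1 : (1 : ℝ) ≤ P := one_le_prodR _ _ fun i _ => hinner_ge1 i
  have hinner_le : ∀ i : Fin d,
      (∏ j ∈ univ.filter (fun j : Fin d => i < j), ((lt i : ℝ) - (lt j : ℝ)))
        ≤ ((lt i).descFactorial (d - 1 - (i : ℕ)) : ℝ) := by
    intro i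
    rw [← aux_reindex d lt i (by rw [hlt_def]; omega)]
    apply Finset.prod_le_prod
    · intro j hj; linarith [hfac i j (by simpa using hj)]
    · intro j hj
      have h1 : ((d - 1 - (j : ℕ) : ℕ) : ℝ) ≤ (lt j : ℝ) := by
        have : d - 1 - (j : ℕ) ≤ lt j := by rw [hlt_def]; omega
        exact_mod_cast this
      linarith
  have hP_le : P ≤ ∏ i, ((lt i).descFactorial (d - 1 - (i : ℕ)) : ℝ) := by
    apply Finset.prod_le_prod
    · intro i _; linarith [hinner_ge1 i]
    · intro i _; exact hinner_le i
  -- factorial identities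
  have hdesc : ∀ i : Fin d,
      ((lam i).factorial : ℝ) * ((lt i).descFactorial (d - 1 - (i : ℕ)) : ℝ)
        = ((lt i).factorial : ℝ) := by
    intro i
    have h1 : d - 1 - (i : ℕ) ≤ lt i := by rw [hlt_def]; omega
    have h2 := Nat.factorial_mul_descFactorial h1
    rw [show lt i - (d - 1 - (i : ℕ)) = lam i by rw [hlt_def]; omega] at h2
    exact_mod_cast h2
  set L : ℝ := ∏ i, ((lam i).factorial : ℝ) with hL
  set F : ℝ := ∏ i, ((lt i).factorial : ℝ) with hF
  set Dp : ℝ := ∏ i, ((lt i).descFactorial (d - 1 - (i : ℕ)) : ℝ) with hDp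
  have hLpos : 0 < L := Finset.prod_pos fun i _ => by positivity
  have hFpos : 0 < F := Finset.prod_pos fun i _ => by positivity
  have hDppos : 0 < Dp := Finset.prod_pos fun i _ => by
    have := hdesc i
    nlinarith [Nat.factorial_pos (lam i), Nat.factorial_pos (lt i),
      (Nat.cast_pos (α := ℝ)).2 (Nat.factorial_pos (lam i)),
      (Nat.cast_pos (α := ℝ)).2 (Nat.factorial_pos (lt i))]
  have hLDF : L * Dp = F := by
    rw [hL, hDp, hF, ← Finset.prod_mul_distrib]
    exact Finset.prod_congr rfl fun i _ => hdesc i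
  set M : ℝ := (Nat.multinomial Finset.univ lam : ℝ) with hMdef
  have hM : L * M = (n.factorial : ℝ) := by
    have h1 := Nat.multinomial_spec univ lam
    rw [hsum] at h1
    rw [hL, hMdef, ← Nat.cast_prod, ← Nat.cast_mul, h1]
  have hMpos : 0 < M := by
    have := Nat.multinomial_pos (s := univ) (f := lam)
    exact_mod_cast Nat.cast_pos.2 this
  -- exponent sum
  have hsum_exp : ∑ i : Fin d, (d - 1 - (i : ℕ)) = D := by
    rw [Fin.sum_univ_eq_sum_range (fun k => d - 1 - k) d]
    rw [Finset.sum_range_reflect (fun k => k) d]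
    exact Finset.sum_range_id d
  have hDp_le : Dp ≤ (n + d : ℝ) ^ D := by
    rw [hDp, ← hsum_exp, ← Finset.prod_pow_eq_pow_sum]
    apply Finset.prod_le_prod
    · intro i _; positivity
    · intro i _
      calc ((lt i).descFactorial (d - 1 - (i : ℕ)) : ℝ)
          ≤ ((lt i : ℕ) : ℝ) ^ (d - 1 - (i : ℕ)) := by
            exact_mod_cast Nat.descFactorial_le_pow (lt i) _
        _ ≤ (n + d : ℝ) ^ (d - 1 - (i : ℕ)) := by
            apply pow_le_pow_left₀ (by positivity)
            have h1 : lt i ≤ n + d := by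
              have := hlam_le i; have := i.isLt; rw [hlt_def]; omega
            exact_mod_cast h1
  -- part 1
  have hpart1a : dimP ≤ M := by
    rw [hdim_def]
    have h1 : (n.factorial : ℝ) / F * P ≤ (n.factorial : ℝ) / F * Dp := by
      apply mul_le_mul_of_nonneg_left hP_le (by positivity)
    calc (n.factorial : ℝ) / F * P ≤ (n.factorial : ℝ) / F * Dp := h1
      _ = M := by
        rw [← hM, ← hLDF]
        field_simp
  have hpart1b : M * ((n + d : ℝ) ^ D)⁻¹ ≤ dimP := by
    rw [hdim_def]
    have h1 : (n.factorial : ℝ) / F ≤ (n.factorial : ℝ) / F * P := by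
      nlinarith [Nat.factorial_pos n, (Nat.cast_pos (α := ℝ)).2 (Nat.factorial_pos n),
        div_pos ((Nat.cast_pos (α := ℝ)).2 (Nat.factorial_pos n)) hFpos]
    have h0 : (n.factorial : ℝ) / F = M / Dp := by
      rw [← hM, ← hLDF]
      field_simp
    have h2 : M * ((n + d : ℝ) ^ D)⁻¹ ≤ (n.factorial : ℝ) / F := by
      rw [h0, mul_inv_le_iff₀ (by positivity), div_mul_eq_mul_div,
        le_div_iff₀ hDppos]
      nlinarith [hMpos.le, hDp_le, hDppos.le]
    linarith
  -- part 2 : entropy bounds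
  set Q : ℝ := ∏ i, ((lam i : ℝ) / n) ^ (lam i) with hQ
  have hnR : (0:ℝ) < n := by exact_mod_cast hn
  have hQpos : 0 < Q := by
    apply Finset.prod_pos
    intro i _
    rcases Nat.eq_zero_or_pos (lam i) with h | h
    · rw [h]; norm_num
    · apply pow_pos; apply div_pos _ hnR; exact_mod_cast h
  have hexp : Real.exp ((n:ℝ) * H) = Q⁻¹ := by
    rw [hH_def, Finset.mul_sum, Real.exp_sum, hQ, ← Finset.prod_inv_distrib]
    apply Finset.prod_congr rfl
    intro i _
    rcases Nat.eq_zero_or_pos (lam i) with h | h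
    · rw [h]; simp [Real.negMulLog]
    · have hx : (0:ℝ) < (lam i : ℝ) / n := div_pos (by exact_mod_cast h) hnR
      have h1 : (n:ℝ) * Real.negMulLog ((lam i : ℝ)/n)
          = -((lam i : ℝ) * Real.log ((lam i:ℝ)/n)) := by
        simp only [Real.negMulLog]
        field_simp
      rw [h1, Real.exp_neg, Real.exp_nat_mul, Real.exp_log hx]
  have hsplit : ∀ (g : Fin d → ℕ), (∑ i, g i = n) →
      ∏ i, ((lam i : ℝ)/n) ^ (g i) = (∏ i, ((lam i:ℝ)) ^ (g i)) / (n:ℝ)^n := by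
    intro g hg
    simp_rw [div_pow]
    rw [Finset.prod_div_distrib, Finset.prod_pow_eq_pow_sum, hg]
  have hterm : ∀ k : Fin d → ℕ, (∑ i, k i = n) →
      (Nat.multinomial univ k : ℝ) * ∏ i, ((lam i : ℝ)/n) ^ (k i) ≤ M * Q := by
    intro k hk
    have hnat := aux_term_le lam k (by rw [hk, hsum])
    have hcast : (Nat.multinomial univ k : ℝ) * ∏ i, ((lam i:ℝ)) ^ (k i)
        ≤ (Nat.multinomial univ lam : ℝ) * ∏ i, ((lam i:ℝ)) ^ (lam i) := by
      exact_mod_cast hnat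
    rw [hsplit k hk, hQ, hsplit lam hsum, hMdef]
    rw [mul_div_assoc', mul_div_assoc']
    gcongr
  have hone : (1:ℝ) = ∑ k ∈ piAntidiag (univ : Finset (Fin d)) n,
      ((Nat.multinomial univ k : ℝ) * ∏ i, ((lam i : ℝ)/n) ^ (k i)) := by
    have h := Finset.sum_pow_eq_sum_piAntidiag (univ : Finset (Fin d))
      (fun i => (lam i:ℝ)/n) n
    rw [← Finset.sum_div, ← Nat.cast_sum, hsum, div_self (ne_of_gt hnR), one_pow] at h
    exact h
  have hlam_mem : lam ∈ piAntidiag (univ : Finset (Fin d)) n := by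
    rw [Finset.mem_piAntidiag]
    exact ⟨hsum, fun i _ => mem_univ i⟩
  have hterm_nonneg : ∀ k ∈ piAntidiag (univ : Finset (Fin d)) n,
      (0:ℝ) ≤ (Nat.multinomial univ k : ℝ) * ∏ i, ((lam i : ℝ)/n) ^ (k i) := by
    intro k _
    positivity
  have hkey1 : M * Q ≤ 1 := by
    rw [hone]
    exact Finset.single_le_sum hterm_nonneg hlam_mem
  have hcard : ((piAntidiag (univ : Finset (Fin d)) n).card : ℝ) ≤ (n+1:ℝ)^d := by
    have hsub : piAntidiag (univ : Finset (Fin d)) n ⊆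
        Fintype.piFinset (fun _ : Fin d => range (n+1)) := by
      intro k hk
      rw [Finset.mem_piAntidiag] at hk
      rw [Fintype.mem_piFinset]
      intro i
      rw [mem_range]
      have h1 : k i ≤ n := hk.1 ▸ Finset.single_le_sum (f := fun i => k i)
        (fun _ _ => Nat.zero_le _) (mem_univ i)
      omega
    have h2 : (piAntidiag (univ : Finset (Fin d)) n).card ≤ (n+1)^d := by
      calc (piAntidiag (univ : Finset (Fin d)) n).card
          ≤ (Fintype.piFinset (fun _ : Fin d => range (n+1))).card :=
            Finset.card_le_card hsub
        _ = (n+1)^d := by rw [Fintype.card_piFinset]; simp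
    exact_mod_cast h2
  have hkey2 : (1:ℝ) ≤ (n+1:ℝ)^d * (M * Q) := by
    have h1 : (1:ℝ) ≤ ((piAntidiag (univ : Finset (Fin d)) n).card : ℝ) * (M * Q) := by
      rw [hone]
      have h2 := Finset.sum_le_card_nsmul (piAntidiag (univ : Finset (Fin d)) n)
        (fun k => (Nat.multinomial univ k : ℝ) * ∏ i, ((lam i : ℝ)/n) ^ (k i))
        (M * Q) (fun k hk => by
          rw [Finset.mem_piAntidiag] at hk
          exact hterm k hk.1)
      simpa [nsmul_eq_mul] using h2
    have hMQ : 0 ≤ M * Q := mul_nonneg hMpos.le hQpos.le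
    calc (1:ℝ) ≤ ((piAntidiag (univ : Finset (Fin d)) n).card : ℝ) * (M * Q) := h1
      _ ≤ (n+1:ℝ)^d * (M * Q) := mul_le_mul_of_nonneg_right hcard hMQ
  -- conclusions
  have hup2 : dimP ≤ Real.exp ((n:ℝ) * H) := by
    have h1 : M ≤ Q⁻¹ := by
      rw [le_inv_comm₀ hMpos hQpos]
      calc Q = Q * 1 := (mul_one Q).symm
        _ ≤ Q * (M⁻¹ * M) := by rw [inv_mul_cancel₀ (ne_of_gt hMpos)]
        _ = M⁻¹ * (M * Q) := by ring
        _ ≤ M⁻¹ * 1 := by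
            apply mul_le_mul_of_nonneg_left hkey1 (by positivity)
        _ = M⁻¹ := mul_one _
    rw [hexp]
    exact hpart1a.trans h1
  have hexp_le : Real.exp ((n:ℝ) * H) ≤ (n + d : ℝ)^d * M := by
    rw [hexp]
    have h1 : Q⁻¹ ≤ (n+1:ℝ)^d * M := by
      calc Q⁻¹ = 1 * Q⁻¹ := (one_mul _).symm
        _ ≤ ((n+1:ℝ)^d * (M * Q)) * Q⁻¹ := by
            apply mul_le_mul_of_nonneg_right hkey2 (inv_nonneg.2 hQpos.le)
        _ = (n+1:ℝ)^d * M := by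
            rw [mul_assoc, mul_assoc, mul_inv_cancel₀ (ne_of_gt hQpos), mul_one]
    have h2 : (n+1:ℝ)^d * M ≤ (n + d : ℝ)^d * M := by
      apply mul_le_mul_of_nonneg_right _ hMpos.le
      apply pow_le_pow_left₀ (by positivity)
      have h3 : (1:ℝ) ≤ (d:ℝ) := by exact_mod_cast hd
      linarith
    exact h1.trans h2
  obtain ⟨c, hc⟩ : ∃ c, d * (d - 1) = c + c := by
    obtain ⟨c, hc⟩ := Nat.even_mul_succ_self (d - 1)
    exact ⟨c, by rw [Nat.sub_add_cancel hd] at hc; rw [mul_comm]; exact hc⟩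
  have hDc : D = c := by rw [hD, hc]; omega
  have hE : d * (d + 1) / 2 = c + d := by
    have h4 : d * (d + 1) = d * (d - 1) + 2 * d := by
      obtain ⟨e, rfl⟩ : ∃ e, d = e + 1 := ⟨d - 1, by omega⟩
      simp only [Nat.add_sub_cancel]
      ring
    rw [h4, hc]
    omega
  have hpow : (n + d : ℝ) ^ (d * (d + 1) / 2) = (n + d : ℝ)^d * (n + d : ℝ)^D := by
    rw [hE, hDc, pow_add, mul_comm]
  have hlo2 : Real.exp ((n:ℝ) * H) * ((n + d : ℝ) ^ (d * (d + 1) / 2))⁻¹ ≤ dimP := by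
    calc Real.exp ((n:ℝ) * H) * ((n + d : ℝ) ^ (d * (d + 1) / 2))⁻¹
        ≤ ((n + d : ℝ)^d * M) * ((n + d : ℝ) ^ (d * (d + 1) / 2))⁻¹ := by
          apply mul_le_mul_of_nonneg_right hexp_le (by positivity)
      _ = M * ((n + d : ℝ)^D)⁻¹ := by
          rw [hpow]
          have hnd : (0:ℝ) < (n:ℝ) + (d:ℝ) := by positivity
          field_simp
      _ ≤ dimP := hpart1b
  exact ⟨⟨hpart1b, hpart1a⟩, ⟨hlo2, hup2⟩⟩
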